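/- Let L be a lattice of signature (1,n) with positive cone C. For each primitive isotropic integral vector e in the closure of C, define the open horoball B_e = {x ∈ H^n : (x,e) < 1/2}. Then for distinct primitive isotropic integral vectors e and e', the horoballs B_e and B_{e'} are disjoint. -/

import Mathlib

open Matrix Filter Topology
open scoped BigOperators

noncomputable section

/-- The standard Minkowski bilinear form of signature `(1,n)` on `ℝ^{n+1}`. -/
def mink (n : ℕ) (v w : Fin (n+1) → ℝ) : ℝ :=
  v 0 * w 0 - ∑ i : Fin n, v i.succ * w i.succ

/-- Real coordinates of an integral vector. -/
def zc (n : ℕ) (v : Fin (n+1) → ℤ) : Fin (n+1) → ℝ := fun i => (v i : ℝ)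

/-- An integral vector is primitive if it is not an integer multiple `k • w`, `k ≥ 2`. -/
def Primitive (n : ℕ) (e : Fin (n+1) → ℤ) : Prop :=
  ¬ ∃ (w : Fin (n+1) → ℤ) (k : ℤ), 2 ≤ k ∧ e = k • w

/-- The hyperboloid model determined by the form `B` and the positive cone `C`. -/
def hyperboloid (n : ℕ) (B : (Fin (n+1) → ℝ) → (Fin (n+1) → ℝ) → ℝ)
    (C : Set (Fin (n+1) → ℝ)) : Set (Fin (n+1) → ℝ) :=
  {x | x ∈ C ∧ B x x = 1}

namespace Stmt2Aux

variable {n : ℕ}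

lemma mink_comm (v w : Fin (n+1) → ℝ) : mink n v w = mink n w v := by
  unfold mink
  rw [mul_comm]
  congr 1
  exact Finset.sum_congr rfl fun i _ => mul_comm _ _

lemma mink_continuous (u : Fin (n+1) → ℝ) : Continuous (mink n u) := by
  unfold mink
  exact (continuous_const.mul (continuous_apply (0 : Fin (n+1)))).sub
    (continuous_finset_sum _ fun i _ => continuous_const.mul (continuous_apply i.succ))

lemma mink_add_left (u v w : Fin (n+1) → ℝ) :
    mink n (u + v) w = mink n u w + mink n v w := by
  unfold mink
  simp only [Pi.add_apply, add_mul]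
  rw [Finset.sum_add_distrib]
  ring

lemma mink_smul_left (t : ℝ) (u w : Fin (n+1) → ℝ) :
    mink n (t • u) w = t * mink n u w := by
  unfold mink
  simp only [Pi.smul_apply, smul_eq_mul, mul_assoc]
  rw [← Finset.mul_sum]
  ring

/-- The orthogonal complement of a positive vector is negative definite. -/
lemma mink_perp {u v : Fin (n+1) → ℝ} (hu : 0 < mink n u u) (huv : mink n u v = 0) :
    mink n v v ≤ 0 ∧ (mink n v v = 0 → v = 0) := by
  unfold mink at hu huv ⊢
  have hcs := Finset.sum_mul_sq_le_sq_mul_sq Finset.univ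
    (fun i : Fin n => u i.succ) (fun i : Fin n => v i.succ)
  have e1 : ∑ i : Fin n, u i.succ ^ 2 = ∑ i : Fin n, u i.succ * u i.succ := by
    simp [sq]
  have e2 : ∑ i : Fin n, v i.succ ^ 2 = ∑ i : Fin n, v i.succ * v i.succ := by
    simp [sq]
  rw [e1, e2] at hcs
  have hSa : (0:ℝ) ≤ ∑ i : Fin n, u i.succ * u i.succ :=
    Finset.sum_nonneg fun i _ => mul_self_nonneg _
  have hSb : (0:ℝ) ≤ ∑ i : Fin n, v i.succ * v i.succ :=
    Finset.sum_nonneg fun i _ => mul_self_nonneg _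
  have hu0 : u 0 ≠ 0 := by
    intro h
    rw [h] at hu
    nlinarith
  rcases hSb.lt_or_eq with hpos | hzero
  · -- strictly negative, cannot be zero
    have hlt : v 0 * v 0 < ∑ i : Fin n, v i.succ * v i.succ := by
      have h4 : (u 0 * v 0) * (u 0 * v 0) ≤
          (∑ i : Fin n, u i.succ * u i.succ) * ∑ i : Fin n, v i.succ * v i.succ := by
        have heq : u 0 * v 0 = ∑ i : Fin n, u i.succ * v i.succ := by linarith
        rw [heq]
        nlinarith [hcs]
      nlinarith [mul_pos (mul_self_pos.mpr hu0) hpos]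
    constructor
    · linarith
    · intro h; linarith
  · -- all spatial components of v vanish
    have hall : ∀ i : Fin n, v i.succ = 0 := by
      intro i
      have := (Finset.sum_eq_zero_iff_of_nonneg
        (fun i _ => mul_self_nonneg (v i.succ))).mp hzero.symm i (Finset.mem_univ i)
      exact mul_self_eq_zero.mp this
    have hsum0 : ∑ i : Fin n, u i.succ * v i.succ = 0 :=
      Finset.sum_eq_zero fun i _ => by rw [hall i, mul_zero]
    have hv0 : v 0 = 0 := by
      rw [hsum0] at huv
      have : u 0 * v 0 = 0 := by linarith
      rcases mul_eq_zero.mp this with h | h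
      · exact absurd h hu0
      · exact h
    constructor
    · rw [hv0, ← hzero]; norm_num
    · intro _
      funext i
      refine Fin.cases ?_ ?_ i
      · exact hv0
      · exact hall

/-- The arithmetic step: proportional primitive integer vectors with positive ratio
are equal. -/
lemma int_eq (e e' : Fin (n+1) → ℤ) (hp : Primitive n e) (hp' : Primitive n e')
    (i : Fin (n+1)) (hcross : ∀ j, e j * e' i = e' j * e i) (hsign : 0 < e i * e' i) :
    e = e' := by
  set c := e i with hc
  set d := e' i with hd
  have hc0 : c ≠ 0 := by intro h; rw [h] at hsign; simp at hsign
  have hd0 : d ≠ 0 := by intro h; rw [h] at hsign; simp at hsign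
  have hg : 0 < Int.gcd c d := Int.gcd_pos_of_ne_zero_left d hc0
  set g : ℤ := (Int.gcd c d : ℤ) with hgdef
  have hg0 : g ≠ 0 := by
    simp only [hgdef, ne_eq, Int.natCast_eq_zero]
    omega
  set r : ℤ := c / g with hr
  set s : ℤ := d / g with hs
  have hcr : c = g * r := (Int.mul_ediv_cancel' (Int.gcd_dvd_left c d)).symm
  have hds : d = g * s := (Int.mul_ediv_cancel' (Int.gcd_dvd_right c d)).symm
  have hcop : IsCoprime r s := by
    rw [Int.isCoprime_iff_gcd_eq_one]
    exact Int.gcd_div_gcd_div_gcd hg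
  have key : ∀ j, s * e j = r * e' j := by
    intro j
    have h1 : e j * d = e' j * c := hcross j
    rw [hcr, hds] at h1
    apply mul_left_cancel₀ hg0
    ring_nf
    ring_nf at h1
    linarith
  have hr0 : r ≠ 0 := by
    intro h
    rw [h, mul_zero] at hcr
    exact hc0 hcr
  have hs0 : s ≠ 0 := by
    intro h
    rw [h, mul_zero] at hds
    exact hd0 hds
  -- s divides every coordinate of e'
  have hsdvd : ∀ j, s ∣ e' j := by
    intro j
    have : s ∣ r * e' j := ⟨e j, (key j).symm⟩
    exact (hcop.symm).dvd_of_dvd_mul_left this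
  have hrdvd : ∀ j, r ∣ e j := by
    intro j
    have : r ∣ s * e j := ⟨e' j, key j⟩
    exact hcop.dvd_of_dvd_mul_left this
  -- primitivity forces s = ±1 and r = ±1
  have hone : ∀ (t : ℤ) (f : Fin (n+1) → ℤ), Primitive n f → t ≠ 0 → (∀ j, t ∣ f j) →
      t = 1 ∨ t = -1 := by
    intro t f hpf ht0 hdvd
    by_contra hcon
    push_neg at hcon
    have hf : f = t • (fun j => f j / t) := by
      funext j
      simp only [Pi.smul_apply, smul_eq_mul]
      exact (Int.mul_ediv_cancel' (hdvd j)).symm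
    rcases lt_or_gt_of_ne ht0 with hneg | hposi
    · exact hpf ⟨-(fun j => f j / t), -t, by omega, by rw [neg_smul_neg]; exact hf⟩
    · exact hpf ⟨(fun j => f j / t), t, by omega, hf⟩
  have hsone := hone s e' hp' hs0 hsdvd
  have hrone := hone r e hp hr0 hrdvd
  -- signs agree
  have hrs : 0 < r * s := by
    have : 0 < (g * r) * (g * s) := by rw [← hcr, ← hds]; exact hsign
    nlinarith [sq_nonneg g]
  have hreqs : r = s := by
    rcases hrone with h1 | h1 <;> rcases hsone with h2 | h2 <;>
      rw [h1, h2] at hrs ⊢ <;> try norm_num at hrs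
  funext j
  have := key j
  rw [hreqs] at this
  exact mul_left_cancel₀ hs0 this

end Stmt2Aux

/-- the horoballs `B_e = {x ∈ Hⁿ : (x,e) < 1/2}` at distinct primitive
isotropic integral vectors in the closure of the positive cone are disjoint. -/
theorem stmt2 (n : ℕ)
    (B : (Fin (n+1) → ℝ) → (Fin (n+1) → ℝ) → ℝ)
    (hsig : ∃ T : (Fin (n+1) → ℝ) ≃ₗ[ℝ] (Fin (n+1) → ℝ),
      ∀ v w, B v w = mink n (T v) (T w))
    (hInt : ∀ v w : Fin (n+1) → ℤ, ∃ m : ℤ, B (zc n v) (zc n w) = (m : ℝ))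
    (C : Set (Fin (n+1) → ℝ))
    (hC : ∃ v₀, 0 < B v₀ v₀ ∧ C = connectedComponentIn {v | 0 < B v v} v₀)
    (e e' : Fin (n+1) → ℤ) (hne : e ≠ e')
    (hprim : Primitive n e) (hprim' : Primitive n e')
    (hiso : B (zc n e) (zc n e) = 0) (hiso' : B (zc n e') (zc n e') = 0)
    (hcl : zc n e ∈ closure C) (hcl' : zc n e' ∈ closure C) :
    Disjoint {x | x ∈ hyperboloid n B C ∧ B x (zc n e) < 1/2}
             {x | x ∈ hyperboloid n B C ∧ B x (zc n e') < 1/2} := by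
  obtain ⟨T, hT⟩ := hsig
  obtain ⟨v₀, hv₀, rfl⟩ := hC
  set S := connectedComponentIn {v | 0 < B v v} v₀ with hSdef
  -- bilinearity and continuity facts
  have hBsymm : ∀ u v, B u v = B v u := fun u v => by
    rw [hT, hT, Stmt2Aux.mink_comm]
  have hBadd : ∀ u v w, B (u + v) w = B u w + B v w := fun u v w => by
    rw [hT, hT, hT, _root_.map_add, Stmt2Aux.mink_add_left]
  have hBsmul : ∀ (t : ℝ) u w, B (t • u) w = t * B u w := fun t u w => by
    rw [hT, hT, _root_.map_smul, Stmt2Aux.mink_smul_left]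
  have hBsub : ∀ u v w, B (u - v) w = B u w - B v w := fun u v w => by
    have h := hBadd (u - v) v w
    rw [sub_add_cancel] at h
    linarith
  have hBsub2 : ∀ w u v, B w (u - v) = B w u - B w v := fun w u v => by
    rw [hBsymm, hBsub, hBsymm u w, hBsymm v w]
  have hBsmul2 : ∀ (t : ℝ) w u, B w (t • u) = t * B w u := fun t w u => by
    rw [hBsymm, hBsmul, hBsymm u w]
  have hBadd2 : ∀ w u v, B w (u + v) = B w u + B w v := fun w u v => by
    rw [hBsymm, hBadd, hBsymm u w, hBsymm v w]
  have hBcont : ∀ u, Continuous (B u) := by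
    intro u
    have h : B u = fun v => mink n (T u) (T v) := funext fun v => hT u v
    rw [h]
    exact (Stmt2Aux.mink_continuous (T u)).comp
      (T : (Fin (n+1) → ℝ) →ₗ[ℝ] (Fin (n+1) → ℝ)).continuous_of_finiteDimensional
  have hperp : ∀ u v, 0 < B u u → B u v = 0 → B v v ≤ 0 ∧ (B v v = 0 → v = 0) := by
    intro u v hu huv
    rw [hT] at hu huv
    have h := Stmt2Aux.mink_perp hu huv
    rw [hT]
    exact ⟨h.1, fun hz => by
      have := h.2 hz
      have : T v = T 0 := by rw [map_zero]; exact this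
      exact T.injective this⟩
  -- positivity of B x · on the component S
  have hposS : ∀ x ∈ S, ∀ y ∈ S, 0 < B x y := by
    intro x hx y hy
    have hxx : 0 < B x x := connectedComponentIn_subset {v | 0 < B v v} v₀ hx
    have hne0 : ∀ z ∈ S, B x z ≠ 0 := by
      intro z hz h0
      have hzz : 0 < B z z := connectedComponentIn_subset {v | 0 < B v v} v₀ hz
      exact absurd (hperp x z hxx h0).1 (not_le.mpr hzz)
    by_contra hle
    push_neg at hle
    rcases hle.lt_or_eq with hlt | heq
    · have hconn : IsPreconnected S := isPreconnected_connectedComponentIn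
      have hsub := hconn.intermediate_value hy hx (hBcont x).continuousOn
      have h0 : (0:ℝ) ∈ Set.Icc (B x y) (B x x) := ⟨le_of_lt hlt, le_of_lt hxx⟩
      obtain ⟨z, hz, hz0⟩ := hsub h0
      exact hne0 z hz hz0
    · exact hne0 y hy heq
  have hclpos : ∀ x ∈ S, ∀ z ∈ closure S, 0 ≤ B x z := by
    intro x hx z hz
    have hsub : closure S ⊆ (B x) ⁻¹' Set.Ici 0 :=
      closure_minimal (fun w hw => le_of_lt (hposS x hx w hw))
        (IsClosed.preimage (hBcont x) isClosed_Ici)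
    exact hsub hz
  -- nonvanishing of the integral vectors
  have hzc_ne : ∀ f : Fin (n+1) → ℤ, Primitive n f → zc n f ≠ 0 := by
    intro f hpf h0
    apply hpf
    refine ⟨0, 2, le_refl _, ?_⟩
    funext j
    have := congrFun h0 j
    simp only [zc, Pi.zero_apply] at this
    have : f j = 0 := by exact_mod_cast this
    simp [this]
  -- main argument
  rw [Set.disjoint_left]
  rintro x ⟨⟨hxS, hxx⟩, hxe⟩ ⟨_, hxe'⟩
  set E := zc n e with hE
  set E' := zc n e' with hE'
  have hx0 : 0 < B x x := by rw [hxx]; norm_num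
  -- positivity of a and b
  have hBpos : ∀ (f : Fin (n+1) → ℤ), Primitive n f → B (zc n f) (zc n f) = 0 →
      zc n f ∈ closure S → 0 < B x (zc n f) := by
    intro f hpf hisof hclf
    rcases (hclpos x hxS (zc n f) hclf).lt_or_eq with h | h
    · exact h
    · exfalso
      exact hzc_ne f hpf ((hperp x (zc n f) hx0 h.symm).2 hisof)
  have ha : 0 < B x E := hBpos e hprim hiso hcl
  have hb : 0 < B x E' := hBpos e' hprim' hiso' hcl'
  set a := B x E with hadef
  set b := B x E' with hbdef
  obtain ⟨m, hm⟩ := hInt e e'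
  -- the vector w = b•E - a•E'
  set w : Fin (n+1) → ℝ := b • E - a • E' with hwdef
  have hxw : B x w = 0 := by
    rw [hwdef, hBsub2, hBsmul2, hBsmul2, ← hadef, ← hbdef]
    ring
  have hww : B w w = -(2*a*b) * B E E' := by
    simp only [hwdef, hBsub, hBsub2, hBsmul, hBsmul2]
    simp only [hBsymm E' E, hiso, hiso']
    ring
  -- the vector w2 = (b•E + a•E') - (2*a*b)•x
  set w2 : Fin (n+1) → ℝ := (b • E + a • E') - (2*a*b) • x with hw2def
  have hxw2 : B x w2 = 0 := by
    simp only [hw2def, hBsub2, hBadd2, hBsmul2]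
    rw [hxx, ← hadef, ← hbdef]
    ring
  have hw2w2 : B w2 w2 = 2*a*b * B E E' - 4*(a*b)^2 := by
    simp only [hw2def, hBsub, hBsub2, hBadd, hBadd2, hBsmul, hBsmul2]
    simp only [hBsymm E' E, hBsymm E x, hBsymm E' x, hiso, hiso', hxx]
    rw [← hadef, ← hbdef]
    ring
  -- bounds on m
  have hub := (hperp x w2 hx0 hxw2).1
  have hlb := (hperp x w hx0 hxw).1
  rw [hw2w2] at hub
  rw [hww] at hlb
  have hab : 0 < a * b := mul_pos ha hb
  have hmlb : (0:ℝ) ≤ m := by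
    rw [hE, hE', hm] at hlb
    nlinarith
  have hmub : (m:ℝ) ≤ 2*(a*b) := by
    rw [hE, hE', hm] at hub
    nlinarith
  have hablt : a * b < 1/4 := by
    have h2 : a < 1/2 := hxe
    have h2' : b < 1/2 := hxe'
    nlinarith
  have hm0 : m = 0 := by
    have h1 : (m:ℝ) < 1 := by linarith
    have h2 : (0:ℤ) ≤ m := by exact_mod_cast hmlb
    have h3 : m < 1 := by exact_mod_cast h1
    omega
  -- equality case: w = 0
  have hBEE' : B E E' = 0 := by rw [hE, hE', hm, hm0]; norm_num
  have hw0 : w = 0 := by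
    apply (hperp x w hx0 hxw).2
    rw [hww, hBEE']
    ring
  have hprop : b • E = a • E' := by
    rw [hwdef] at hw0
    exact sub_eq_zero.mp hw0
  -- pass to coordinates
  have hcoord : ∀ j, b * (e j : ℝ) = a * (e' j : ℝ) := by
    intro j
    have := congrFun hprop j
    simpa [hE, hE', zc] using this
  -- find an index where e is nonzero
  have hEne : E ≠ 0 := hzc_ne e hprim
  have hi : ∃ i, e i ≠ 0 := by
    by_contra hcon
    push_neg at hcon
    apply hEne
    funext j
    simp [hE, zc, hcon j]
  obtain ⟨i, hi⟩ := hi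
  have hiR : (e i : ℝ) ≠ 0 := Int.cast_ne_zero.mpr hi
  have hei' : (e' i : ℝ) ≠ 0 := by
    intro h
    have hci := hcoord i
    rw [h, mul_zero] at hci
    rcases mul_eq_zero.mp hci with h' | h'
    · exact absurd h' (ne_of_gt hb)
    · exact hiR h'
  have hcross : ∀ j, e j * e' i = e' j * e i := by
    intro j
    have h1 := hcoord j
    have h2 := hcoord i
    have : (e j : ℝ) * (e' i : ℝ) = (e' j : ℝ) * (e i : ℝ) := by
      have hb0 : b ≠ 0 := ne_of_gt hb
      have hmul : b * ((e j : ℝ) * (e' i : ℝ)) = b * ((e' j : ℝ) * (e i : ℝ)) := by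
        calc b * ((e j : ℝ) * (e' i : ℝ)) = (b * (e j : ℝ)) * (e' i : ℝ) := by ring
        _ = (a * (e' j : ℝ)) * (e' i : ℝ) := by rw [h1]
        _ = (e' j : ℝ) * (a * (e' i : ℝ)) := by ring
        _ = (e' j : ℝ) * (b * (e i : ℝ)) := by rw [← h2]
        _ = b * ((e' j : ℝ) * (e i : ℝ)) := by ring
      exact mul_left_cancel₀ hb0 hmul
    exact_mod_cast this
  have hsign : 0 < e i * e' i := by
    have h2 := hcoord i
    have : (0:ℝ) < (e i : ℝ) * (e' i : ℝ) := by
      have hsq : 0 < b * ((e i:ℝ) * (e i:ℝ)) :=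
        mul_pos hb (mul_self_pos.mpr hiR)
      have : b * ((e i:ℝ) * (e i:ℝ)) = a * ((e' i:ℝ) * (e i:ℝ)) := by
        calc b * ((e i:ℝ) * (e i:ℝ)) = (b * (e i:ℝ)) * (e i:ℝ) := by ring
        _ = (a * (e' i:ℝ)) * (e i:ℝ) := by rw [h2]
        _ = a * ((e' i:ℝ) * (e i:ℝ)) := by ring
      rw [this] at hsq
      by_contra hcon
      push_neg at hcon
      nlinarith
    exact_mod_cast this
  exact hne (Stmt2Aux.int_eq e e' hprim hprim' i hcross hsign)
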